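/- Under the hypotheses of the previous statement (positive recurrence and both entrance boundary conditions), the constant value of $F$ equals $2\int_{-\infty}^{\infty}\mu(y)\int_y^{\infty}\frac{\mu([z,\infty))}{\mu(z)\,a(z)}\,dz\,dy$, where $\mu([z,\infty))=\int_z^{\infty}\mu(w)dw$. -/

import Mathlib

open MeasureTheory Set
open scoped ENNReal


private lemma swap_Ioi (f g : ℝ → ℝ≥0∞) (hf : Measurable f) (hg : Measurable g) :
    ∫⁻ y, f y * ∫⁻ z in Ioi y, g z = ∫⁻ z, g z * ∫⁻ y in Iio z, f y := by
  have hR : MeasurableSet {p : ℝ × ℝ | p.1 < p.2} :=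
    measurableSet_lt measurable_fst measurable_snd
  have hFm : Measurable fun p : ℝ × ℝ => ({p : ℝ × ℝ | p.1 < p.2}).indicator
      (fun p => f p.1 * g p.2) p :=
    ((hf.comp measurable_fst).mul (hg.comp measurable_snd)).indicator hR
  have h1 : ∀ y, f y * ∫⁻ z in Ioi y, g z
      = ∫⁻ z, ({p : ℝ × ℝ | p.1 < p.2}).indicator (fun p => f p.1 * g p.2) (y, z) := by
    intro y
    rw [← lintegral_indicator measurableSet_Ioi, ← lintegral_const_mul _ (hg.indicator measurableSet_Ioi)]
    refine lintegral_congr fun z => ?_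
    by_cases h : y < z <;> simp [Set.indicator, h]
  have h2 : ∀ z, g z * ∫⁻ y in Iio z, f y
      = ∫⁻ y, ({p : ℝ × ℝ | p.1 < p.2}).indicator (fun p => f p.1 * g p.2) (y, z) := by
    intro z
    rw [← lintegral_indicator measurableSet_Iio, ← lintegral_const_mul _ (hf.indicator measurableSet_Iio)]
    refine lintegral_congr fun y => ?_
    by_cases h : y < z <;> simp [Set.indicator, h, mul_comm]
  simp_rw [h1, h2]
  exact lintegral_lintegral_swap hFm.aemeasurable


private lemma swap_Ioc (f g : ℝ → ℝ≥0∞) (hf : Measurable f) (hg : Measurable g) (x : ℝ) :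
    ∫⁻ y in Ioi x, f y * ∫⁻ z in Ioc x y, g z
      = ∫⁻ z in Ioi x, g z * ∫⁻ y in Ici z, f y := by
  set R : Set (ℝ × ℝ) := {p : ℝ × ℝ | x < p.2 ∧ p.2 ≤ p.1} with hRdef
  have hR : MeasurableSet R :=
    (measurableSet_lt measurable_const measurable_snd).inter
      (measurableSet_le measurable_snd measurable_fst)
  have hFm : Measurable fun p : ℝ × ℝ => R.indicator (fun p => f p.1 * g p.2) p :=
    ((hf.comp measurable_fst).mul (hg.comp measurable_snd)).indicator hR
  have h1 : ∀ y, (Ioi x).indicator (fun y => f y * ∫⁻ z in Ioc x y, g z) y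
      = ∫⁻ z, R.indicator (fun p => f p.1 * g p.2) (y, z) := by
    intro y
    by_cases hy : y ∈ Ioi x
    · rw [Set.indicator_of_mem hy,
        ← lintegral_indicator measurableSet_Ioc,
        ← lintegral_const_mul _ (hg.indicator measurableSet_Ioc)]
      refine lintegral_congr fun z => ?_
      by_cases h : x < z ∧ z ≤ y <;>
        simp [Set.indicator, Set.mem_Ioc, hRdef, h, Set.mem_setOf_eq]
    · rw [Set.indicator_of_notMem hy]
      have hz : ∀ z : ℝ, R.indicator (fun p : ℝ × ℝ => f p.1 * g p.2) (y, z) = 0 := by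
        intro z
        apply Set.indicator_of_notMem
        rintro ⟨h1, h2⟩
        exact hy (lt_of_lt_of_le h1 h2)
      simp [hz]
  have h2 : ∀ z, (Ioi x).indicator (fun z => g z * ∫⁻ y in Ici z, f y) z
      = ∫⁻ y, R.indicator (fun p => f p.1 * g p.2) (y, z) := by
    intro z
    by_cases hz : z ∈ Ioi x
    · rw [Set.indicator_of_mem hz,
        ← lintegral_indicator measurableSet_Ici,
        ← lintegral_const_mul _ (hf.indicator measurableSet_Ici)]
      refine lintegral_congr fun y => ?_
      by_cases h : z ≤ y <;>
        simp [Set.indicator, Set.mem_Ici, hRdef, h, Set.mem_setOf_eq, hz.out, mul_comm]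
    · rw [Set.indicator_of_notMem hz]
      have hy : ∀ y : ℝ, R.indicator (fun p : ℝ × ℝ => f p.1 * g p.2) (y, z) = 0 := by
        intro y
        apply Set.indicator_of_notMem
        rintro ⟨h1, _⟩
        exact hz h1
      simp [hy]
  rw [← lintegral_indicator measurableSet_Ioi, ← lintegral_indicator measurableSet_Ioi]
  simp_rw [h1, h2]
  exact lintegral_lintegral_swap hFm.aemeasurable

private lemma swap_Ico (f g : ℝ → ℝ≥0∞) (hf : Measurable f) (hg : Measurable g) (x : ℝ) :
    ∫⁻ y in Iio x, f y * ∫⁻ z in Ico y x, g z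
      = ∫⁻ z in Iio x, g z * ∫⁻ y in Iic z, f y := by
  set R : Set (ℝ × ℝ) := {p : ℝ × ℝ | p.1 ≤ p.2 ∧ p.2 < x} with hRdef
  have hR : MeasurableSet R :=
    (measurableSet_le measurable_fst measurable_snd).inter
      (measurableSet_lt measurable_snd measurable_const)
  have hFm : Measurable fun p : ℝ × ℝ => R.indicator (fun p => f p.1 * g p.2) p :=
    ((hf.comp measurable_fst).mul (hg.comp measurable_snd)).indicator hR
  have h1 : ∀ y, (Iio x).indicator (fun y => f y * ∫⁻ z in Ico y x, g z) y
      = ∫⁻ z, R.indicator (fun p => f p.1 * g p.2) (y, z) := by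
    intro y
    by_cases hy : y ∈ Iio x
    · rw [Set.indicator_of_mem hy,
        ← lintegral_indicator measurableSet_Ico,
        ← lintegral_const_mul _ (hg.indicator measurableSet_Ico)]
      refine lintegral_congr fun z => ?_
      by_cases h : y ≤ z ∧ z < x <;>
        simp [Set.indicator, Set.mem_Ico, hRdef, h, Set.mem_setOf_eq]
    · rw [Set.indicator_of_notMem hy]
      have hz : ∀ z : ℝ, R.indicator (fun p : ℝ × ℝ => f p.1 * g p.2) (y, z) = 0 := by
        intro z
        apply Set.indicator_of_notMem
        rintro ⟨h1, h2⟩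
        exact hy (lt_of_le_of_lt h1 h2)
      simp [hz]
  have h2 : ∀ z, (Iio x).indicator (fun z => g z * ∫⁻ y in Iic z, f y) z
      = ∫⁻ y, R.indicator (fun p => f p.1 * g p.2) (y, z) := by
    intro z
    by_cases hz : z ∈ Iio x
    · rw [Set.indicator_of_mem hz,
        ← lintegral_indicator measurableSet_Iic,
        ← lintegral_const_mul _ (hf.indicator measurableSet_Iic)]
      refine lintegral_congr fun y => ?_
      by_cases h : y ≤ z <;>
        simp [Set.indicator, Set.mem_Iic, hRdef, h, Set.mem_setOf_eq, hz.out, mul_comm]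
    · rw [Set.indicator_of_notMem hz]
      have hy : ∀ y : ℝ, R.indicator (fun p : ℝ × ℝ => f p.1 * g p.2) (y, z) = 0 := by
        intro y
        apply Set.indicator_of_notMem
        rintro ⟨_, h2⟩
        exact hz h2
      simp [hy]
  rw [← lintegral_indicator measurableSet_Iio, ← lintegral_indicator measurableSet_Iio]
  simp_rw [h1, h2]
  exact lintegral_lintegral_swap hFm.aemeasurable

/-- The constant value of `F` equals the closed-form expression
`2∫ μ(y) ∫_y^∞ μ([z,∞))/(μ(z)a(z)) dz dy`. -/
theorem stmt7 (a b B m s μ F : ℝ → ℝ)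
    (ha : Continuous a) (hapos : ∀ x, 0 < a x) (hbc : Continuous b)
    (hB : ∀ x, B x = ∫ t in (0:ℝ)..x, b t / a t)
    (hm : ∀ x, m x = (a x)⁻¹ * Real.exp (2 * B x))
    (hs : ∀ x, s x = Real.exp (-(2 * B x)))
    (hmint : Integrable m)
    (hμ : ∀ x, μ x = m x / ∫ w, m w)
    (hentp : IntegrableOn (fun x => m x * ∫ t in (0:ℝ)..x, s t) (Ioi 0))
    (hentm : IntegrableOn (fun x => m x * ∫ t in x..(0:ℝ), s t) (Iio 0))
    (hF : ∀ x, F x =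
        2 * (∫ y in Ioi x, μ y * ∫ z in x..y, s z * ∫ w in Iio z, m w) +
        2 * (∫ y in Iio x, μ y * ∫ z in y..x, s z * ∫ w in Ioi z, m w)) :
    ∀ x : ℝ, F x =
      2 * ∫ y, μ y * ∫ z in Ioi y, (∫ w in Ioi z, μ w) / (μ z * a z) := by
  have hane : ∀ x, a x ≠ 0 := fun x => (hapos x).ne'
  have hBc : Continuous B := by
    rw [funext hB]
    exact intervalIntegral.continuous_primitive
      (fun _ _ => (hbc.div ha hane).intervalIntegrable _ _) 0
  have hmc : Continuous m := by
    rw [funext hm]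
    exact (ha.inv₀ hane).mul (Real.continuous_exp.comp (continuous_const.mul hBc))
  have hsc : Continuous s := by
    rw [funext hs]
    exact Real.continuous_exp.comp (continuous_const.mul hBc).neg
  have hmpos : ∀ z, 0 < m z := fun z => by
    rw [hm]
    have := hapos z
    positivity
  have hmnn : ∀ z, 0 ≤ m z := fun z => (hmpos z).le
  have hspos : ∀ z, 0 < s z := fun z => by rw [hs]; positivity
  have hma : ∀ z, m z * a z = Real.exp (2 * B z) := fun z => by
    rw [hm, mul_comm ((a z)⁻¹) _, mul_assoc, inv_mul_cancel₀ (hane z), mul_one]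
  set M := ∫ w, m w with hMdef
  have hM : 0 < M := by
    rw [hMdef, integral_pos_iff_support_of_nonneg_ae (Filter.Eventually.of_forall hmnn) hmint]
    have hsup : Function.support m = Set.univ :=
      Set.eq_univ_of_forall fun z => Function.mem_support.mpr (hmpos z).ne'
    rw [hsup]
    simp
  set G : ℝ → ℝ := fun z => ∫ w in Ioi z, m w with hGdef
  set H : ℝ → ℝ := fun z => ∫ w in Iio z, m w with hHdef
  have hGnn : ∀ z, 0 ≤ G z := fun z => setIntegral_nonneg measurableSet_Ioi fun w _ => hmnn w
  have hHnn : ∀ z, 0 ≤ H z := fun z => setIntegral_nonneg measurableSet_Iio fun w _ => hmnn w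
  have hGle : ∀ z, G z ≤ M := fun z => setIntegral_le_integral hmint (.of_forall hmnn)
  have hHle : ∀ z, H z ≤ M := fun z => setIntegral_le_integral hmint (.of_forall hmnn)
  have hGH : ∀ z, G z + H z = M := by
    intro z
    have h1 := integral_add_compl (measurableSet_Ici (a := z)) hmint
    rw [compl_Ici, integral_Ici_eq_integral_Ioi] at h1
    exact h1
  have hHc : Continuous H := by
    have h1 : Continuous fun z => ∫ w in (0:ℝ)..z, m w :=
      intervalIntegral.continuous_primitive (fun _ _ => hmint.intervalIntegrable) 0
    have h2 : H = fun z => (∫ w in Iic (0:ℝ), m w) + ∫ w in (0:ℝ)..z, m w := by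
      funext z
      simp only [hHdef]
      rw [← integral_Iic_eq_integral_Iio,
        ← intervalIntegral.integral_Iic_sub_Iic hmint.integrableOn hmint.integrableOn]
      ring
    rw [h2]
    exact continuous_const.add h1
  have hGc : Continuous G := by
    have h2 : G = fun z => M - H z := funext fun z => by linarith [hGH z]
    rw [h2]
    exact continuous_const.sub hHc
  -- ENNReal-valued versions
  set em : ℝ → ℝ≥0∞ := fun y => ENNReal.ofReal (m y) with hemdef
  set es : ℝ → ℝ≥0∞ := fun z => ENNReal.ofReal (s z) with hesdef
  set g1 : ℝ → ℝ≥0∞ := fun z => ENNReal.ofReal (s z * H z) with hg1def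
  set g2 : ℝ → ℝ≥0∞ := fun z => ENNReal.ofReal (s z * G z) with hg2def
  set Φ : ℝ → ℝ≥0∞ := fun z => ENNReal.ofReal (s z * H z * G z) with hPdef
  have hemm : Measurable em := ENNReal.measurable_ofReal.comp hmc.measurable
  have hesm : Measurable es := ENNReal.measurable_ofReal.comp hsc.measurable
  have hg1m : Measurable g1 := ENNReal.measurable_ofReal.comp (hsc.mul hHc).measurable
  have hg2m : Measurable g2 := ENNReal.measurable_ofReal.comp (hsc.mul hGc).measurable
  have hg1nn : ∀ z, 0 ≤ s z * H z := fun z => mul_nonneg (hspos z).le (hHnn z)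
  have hg2nn : ∀ z, 0 ≤ s z * G z := fun z => mul_nonneg (hspos z).le (hGnn z)
  have hGof : ∀ z, ∫⁻ y in Ioi z, em y = ENNReal.ofReal (G z) := fun z =>
    (ofReal_integral_eq_lintegral_ofReal hmint.integrableOn (ae_of_all _ hmnn)).symm
  have hHof : ∀ z, ∫⁻ y in Iio z, em y = ENNReal.ofReal (H z) := fun z =>
    (ofReal_integral_eq_lintegral_ofReal hmint.integrableOn (ae_of_all _ hmnn)).symm
  have hGof' : ∀ z, ∫⁻ y in Ici z, em y = ENNReal.ofReal (G z) := fun z => by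
    rw [← setLIntegral_congr (Ioi_ae_eq_Ici (a := z))]
    exact hGof z
  have hHof' : ∀ z, ∫⁻ y in Iic z, em y = ENNReal.ofReal (H z) := fun z => by
    rw [← setLIntegral_congr (Iio_ae_eq_Iic (a := z))]
    exact hHof z
  -- compact-interval finiteness
  have hcfin : ∀ (f : ℝ → ℝ), Continuous f → ∀ u v : ℝ,
      ∫⁻ z in Ioc u v, ENNReal.ofReal (f z) ≠ ⊤ := by
    intro f hf u v
    exact (lt_of_le_of_lt (lintegral_mono fun z => Real.ofReal_le_enorm (f z))
      (hf.integrableOn_Ioc).2).ne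
  -- finiteness from the entrance conditions
  have hfinp : ∫⁻ z in Ioi 0, g2 z ≠ ⊤ := by
    have hswap := swap_Ioc em es hemm hesm 0
    have h1 : ∫⁻ z in Ioi (0:ℝ), es z * ∫⁻ y in Ici z, em y = ∫⁻ z in Ioi (0:ℝ), g2 z :=
      lintegral_congr fun z => by
        rw [hGof' z, hg2def, ← ENNReal.ofReal_mul (hspos z).le]
    rw [← h1, ← hswap]
    have hb : ∀ᵐ y ∂(volume : Measure ℝ), y ∈ Ioi (0:ℝ) →
        em y * ∫⁻ z in Ioc 0 y, es z = ENNReal.ofReal (m y * ∫ t in (0:ℝ)..y, s t) := by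
      refine ae_of_all _ fun y hy => ?_
      rw [intervalIntegral.integral_of_le (le_of_lt hy), ENNReal.ofReal_mul (hmnn y),
        ofReal_integral_eq_lintegral_ofReal hsc.integrableOn_Ioc
          (ae_of_all _ fun z => (hspos z).le)]
    rw [setLIntegral_congr_fun_ae measurableSet_Ioi hb]
    exact (lt_of_le_of_lt (lintegral_mono fun y => Real.ofReal_le_enorm _) hentp.2).ne
  have hfinm : ∫⁻ z in Iio 0, g1 z ≠ ⊤ := by
    have hswap := swap_Ico em es hemm hesm 0
    have h1 : ∫⁻ z in Iio (0:ℝ), es z * ∫⁻ y in Iic z, em y = ∫⁻ z in Iio (0:ℝ), g1 z :=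
      lintegral_congr fun z => by
        rw [hHof' z, hg1def, ← ENNReal.ofReal_mul (hspos z).le]
    rw [← h1, ← hswap]
    have hb : ∀ᵐ y ∂(volume : Measure ℝ), y ∈ Iio (0:ℝ) →
        em y * ∫⁻ z in Ico y 0, es z = ENNReal.ofReal (m y * ∫ t in y..(0:ℝ), s t) := by
      refine ae_of_all _ fun y hy => ?_
      rw [setLIntegral_congr (Ico_ae_eq_Ioc (a := y) (b := (0:ℝ))),
        intervalIntegral.integral_of_le (le_of_lt hy), ENNReal.ofReal_mul (hmnn y),
        ofReal_integral_eq_lintegral_ofReal hsc.integrableOn_Ioc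
          (ae_of_all _ fun z => (hspos z).le)]
    rw [setLIntegral_congr_fun_ae measurableSet_Iio hb]
    exact (lt_of_le_of_lt (lintegral_mono fun y => Real.ofReal_le_enorm _) hentm.2).ne
  -- total finiteness of Φ
  have hΦle1 : ∀ z, Φ z ≤ ENNReal.ofReal M * g1 z := by
    intro z
    simp only [hPdef, hg1def]
    rw [← ENNReal.ofReal_mul hM.le]
    exact ENNReal.ofReal_le_ofReal (by nlinarith [hg1nn z, hGle z, hGnn z])
  have hΦle2 : ∀ z, Φ z ≤ ENNReal.ofReal M * g2 z := by
    intro z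
    simp only [hPdef, hg2def]
    rw [← ENNReal.ofReal_mul hM.le]
    exact ENNReal.ofReal_le_ofReal (by nlinarith [hg2nn z, hHle z, hHnn z])
  have hΦfin : ∫⁻ z, Φ z ≠ ⊤ := by
    have h1 : ∫⁻ z in Iio (0:ℝ), Φ z ≠ ⊤ := by
      refine (lt_of_le_of_lt (lintegral_mono fun z => hΦle1 z) ?_).ne
      rw [lintegral_const_mul _ hg1m]
      exact ENNReal.mul_lt_top ENNReal.ofReal_lt_top hfinm.lt_top
    have h2 : ∫⁻ z in Ioi (0:ℝ), Φ z ≠ ⊤ := by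
      refine (lt_of_le_of_lt (lintegral_mono fun z => hΦle2 z) ?_).ne
      rw [lintegral_const_mul _ hg2m]
      exact ENNReal.mul_lt_top ENNReal.ofReal_lt_top hfinp.lt_top
    have h3 := lintegral_add_compl (μ := volume) Φ (measurableSet_Iic (a := (0:ℝ)))
    rw [compl_Iic] at h3
    rw [← h3, ← setLIntegral_congr (Iio_ae_eq_Iic (a := (0:ℝ)))]
    exact ENNReal.add_ne_top.mpr ⟨h1, h2⟩
  have hg2fin : ∀ y : ℝ, ∫⁻ z in Ioi y, g2 z ≠ ⊤ := by
    intro y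
    have hsub : Ioi y ⊆ Ioc y 0 ∪ Ioi 0 := by
      intro z hz
      rcases le_or_gt z 0 with h | h
      · exact Or.inl ⟨hz, h⟩
      · exact Or.inr h
    refine (lt_of_le_of_lt (lintegral_mono_set hsub) ?_).ne
    refine lt_of_le_of_lt (lintegral_union_le _ _ _) ?_
    exact ENNReal.add_lt_top.mpr
      ⟨(hcfin (fun z => s z * G z) (hsc.mul hGc) y 0).lt_top, hfinp.lt_top⟩
  -- the three Tonelli identities and real conversions
  intro x
  have E1 : ∫⁻ y in Ioi x, em y * ∫⁻ z in Ioc x y, g1 z = ∫⁻ z in Ioi x, Φ z := by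
    rw [swap_Ioc em g1 hemm hg1m x]
    exact lintegral_congr fun z => by
      simp only [hg1def, hPdef]
      rw [hGof' z, ← ENNReal.ofReal_mul (hg1nn z)]
  have E2 : ∫⁻ y in Iio x, em y * ∫⁻ z in Ico y x, g2 z = ∫⁻ z in Iio x, Φ z := by
    rw [swap_Ico em g2 hemm hg2m x]
    exact lintegral_congr fun z => by
      simp only [hg2def, hPdef]
      rw [hHof' z, ← ENNReal.ofReal_mul (hg2nn z)]
      congr 1
      ring
  have E3 : ∫⁻ y, em y * ∫⁻ z in Ioi y, g2 z = ∫⁻ z, Φ z := by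
    rw [swap_Ioi em g2 hemm hg2m]
    exact lintegral_congr fun z => by
      simp only [hg2def, hPdef]
      rw [hHof z, ← ENNReal.ofReal_mul (hg2nn z)]
      congr 1
      ring
  have A1 : (∫ y in Ioi x, m y * ∫ z in x..y, s z * ∫ w in Iio z, m w)
      = (∫⁻ z in Ioi x, Φ z).toReal := by
    have hJc : Continuous fun y => ∫ z in x..y, s z * H z :=
      intervalIntegral.continuous_primitive
        (fun _ _ => ((hsc.mul hHc).intervalIntegrable _ _)) x
    have hnn : 0 ≤ᵐ[volume.restrict (Ioi x)] fun y => m y * ∫ z in x..y, s z * H z := by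
      filter_upwards [ae_restrict_mem measurableSet_Ioi] with y hy
      exact mul_nonneg (hmnn y)
        (intervalIntegral.integral_nonneg (le_of_lt hy) fun z _ => hg1nn z)
    rw [show (fun y => m y * ∫ z in x..y, s z * ∫ w in Iio z, m w)
        = fun y => m y * ∫ z in x..y, s z * H z from rfl]
    rw [integral_eq_lintegral_of_nonneg_ae hnn ((hmc.mul hJc).aestronglyMeasurable.restrict),
      ← E1]
    congr 1
    refine setLIntegral_congr_fun_ae measurableSet_Ioi (ae_of_all _ fun y hy => ?_)
    rw [intervalIntegral.integral_of_le (le_of_lt hy), ENNReal.ofReal_mul (hmnn y),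
      ofReal_integral_eq_lintegral_ofReal (f := fun z => s z * H z) ((hsc.mul hHc).integrableOn_Ioc)
        (ae_of_all _ fun z => hg1nn z)]
  have A2 : (∫ y in Iio x, m y * ∫ z in y..x, s z * ∫ w in Ioi z, m w)
      = (∫⁻ z in Iio x, Φ z).toReal := by
    have hJc : Continuous fun y => ∫ z in y..x, s z * G z := by
      have h := (intervalIntegral.continuous_primitive (μ := volume)
        (fun _ _ => ((hsc.mul hGc).intervalIntegrable _ _)) x).neg
      have heq : (fun y => ∫ z in y..x, s z * G z)
          = fun y => -∫ z in x..y, s z * G z := by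
        funext y
        rw [intervalIntegral.integral_symm]
      rw [heq]
      exact h
    have hnn : 0 ≤ᵐ[volume.restrict (Iio x)] fun y => m y * ∫ z in y..x, s z * G z := by
      filter_upwards [ae_restrict_mem measurableSet_Iio] with y hy
      exact mul_nonneg (hmnn y)
        (intervalIntegral.integral_nonneg (le_of_lt hy) fun z _ => hg2nn z)
    rw [show (fun y => m y * ∫ z in y..x, s z * ∫ w in Ioi z, m w)
        = fun y => m y * ∫ z in y..x, s z * G z from rfl]
    rw [integral_eq_lintegral_of_nonneg_ae hnn ((hmc.mul hJc).aestronglyMeasurable.restrict),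
      ← E2]
    congr 1
    refine setLIntegral_congr_fun_ae measurableSet_Iio (ae_of_all _ fun y hy => ?_)
    rw [setLIntegral_congr (Ico_ae_eq_Ioc (μ := volume) (a := y) (b := x)),
      intervalIntegral.integral_of_le (le_of_lt hy), ENNReal.ofReal_mul (hmnn y),
      ofReal_integral_eq_lintegral_ofReal (f := fun z => s z * G z) ((hsc.mul hGc).integrableOn_Ioc)
        (ae_of_all _ fun z => hg2nn z)]
  have hintoReal : ∀ y : ℝ, (∫ z in Ioi y, s z * G z) = (∫⁻ z in Ioi y, g2 z).toReal := by
    intro y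
    rw [integral_eq_lintegral_of_nonneg_ae (ae_of_all _ fun z => hg2nn z)
      (hsc.mul hGc).aestronglyMeasurable.restrict]
  have A3 : (∫ y, m y * ∫ z in Ioi y, s z * G z) = (∫⁻ z, Φ z).toReal := by
    have hmono : Antitone fun y => ∫⁻ z in Ioi y, g2 z :=
      fun y1 y2 h12 => lintegral_mono_set (Ioi_subset_Ioi h12)
    have houter : AEStronglyMeasurable (fun y => m y * ∫ z in Ioi y, s z * G z) volume := by
      have h1 : Measurable fun y => (∫⁻ z in Ioi y, g2 z).toReal :=
        hmono.measurable.ennreal_toReal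
      have h2 : (fun y => m y * ∫ z in Ioi y, s z * G z)
          = fun y => m y * (∫⁻ z in Ioi y, g2 z).toReal := by
        funext y
        rw [hintoReal y]
      rw [h2]
      exact (hmc.measurable.mul h1).aestronglyMeasurable
    rw [integral_eq_lintegral_of_nonneg_ae (ae_of_all _ fun y => mul_nonneg (hmnn y)
      (setIntegral_nonneg measurableSet_Ioi fun z _ => hg2nn z)) houter, ← E3]
    congr 1
    refine lintegral_congr fun y => ?_
    rw [hintoReal y, ENNReal.ofReal_mul (hmnn y), ENNReal.ofReal_toReal (hg2fin y)]
  -- assembling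
  have hrhs_inner : ∀ z : ℝ, (∫ w in Ioi z, μ w) / (μ z * a z) = s z * G z := by
    intro z
    have h1 : ∫ w in Ioi z, μ w = G z / M := by
      simp only [hμ]
      rw [integral_div]
    have hmz := (hmpos z).ne'
    have haz := hane z
    have hMne := hM.ne'
    rw [h1, hμ z, hs z, Real.exp_neg, ← hma z]
    field_simp
  have hsplit : (∫⁻ z, Φ z).toReal
      = (∫⁻ z in Ioi x, Φ z).toReal + (∫⁻ z in Iio x, Φ z).toReal := by
    have hfin1 : ∫⁻ z in Ioi x, Φ z ≠ ⊤ :=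
      ((setLIntegral_le_lintegral _ _).trans_lt hΦfin.lt_top).ne
    have hfin2 : ∫⁻ z in Iio x, Φ z ≠ ⊤ :=
      ((setLIntegral_le_lintegral _ _).trans_lt hΦfin.lt_top).ne
    rw [← ENNReal.toReal_add hfin1 hfin2]
    congr 1
    have h3 := lintegral_add_compl (μ := volume) Φ (measurableSet_Iio (a := x))
    rw [compl_Iio, ← setLIntegral_congr (Ioi_ae_eq_Ici (a := x))] at h3
    rw [← h3, add_comm]
  rw [hF x]
  simp only [hrhs_inner]
  simp only [hμ, div_mul_eq_mul_div]
  rw [integral_div, integral_div, integral_div, A1, A2, A3, hsplit]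
  ring
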